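/- Let M be a multiset of n - x real numbers with x ≤ t and n > 3t, and let M1 and M2 each be multisets of size n obtained from M by adding x real numbers, all of which (together with M) lie in the interval [L, H]. Then |AVG(M1) - AVG(M2)| ≤ (H - L) · x / (n - 2t). -/

import Mathlib

/-- `M` with its `t` smallest and `t` largest elements removed (as a sorted list). -/
noncomputable def trimmed (t : ℕ) (M : Multiset ℝ) : List ℝ :=
  ((M.sort (· ≤ ·)).drop t).take (Multiset.card M - 2 * t)

/-- The trimmed average: the mean of `M` after removing the `t` smallest and `t` largest. -/
noncomputable def tAVG (t : ℕ) (M : Multiset ℝ) : ℝ :=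
  (trimmed t M).sum / ((Multiset.card M : ℝ) - 2 * t)


-- gap lemma for "strict mono below m"
lemma gap_lemma (m : ℕ) (g : ℕ → ℕ) (h : ∀ a b, a < b → b < m → g a < g b) :
    ∀ i j, i ≤ j → j < m → g i + (j - i) ≤ g j := by
  intro i j hij hj
  induction j with
  | zero => have : i = 0 := by omega
            subst this; simp
  | succ k ih =>
    rcases Nat.eq_or_lt_of_le hij with rfl | h'
    · simp
    · have h1 := h k (k + 1) (by omega) hj
      have h2 := ih (by omega) (by omega)
      omega

-- order statistic sandwich
lemma order_stat_bounds (M A : Multiset ℝ) (i : ℕ)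
    (hi : i < (M.sort (· ≤ ·)).length) :
    (((M + A).sort (· ≤ ·)).getD i 0 ≤ (M.sort (· ≤ ·)).getD i 0) ∧
    ((M.sort (· ≤ ·)).getD i 0 ≤ ((M + A).sort (· ≤ ·)).getD (i + Multiset.card A) 0) := by
  set l : List ℝ := M.sort (· ≤ ·) with hl
  set l1 : List ℝ := (M + A).sort (· ≤ ·) with hl1
  have hm : l.length = Multiset.card M := Multiset.length_sort _
  have hm1 : l1.length = Multiset.card M + Multiset.card A := by
    rw [hl1, Multiset.length_sort, Multiset.card_add]
  set m := l.length with hmdef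
  set m' := l1.length with hm'def
  have hsub : List.Sublist l l1 := by
    apply List.sublist_of_subperm_of_pairwise _ (Multiset.pairwise_sort _ _) (Multiset.pairwise_sort _ _)
    rw [← Multiset.coe_le, Multiset.sort_eq, Multiset.sort_eq]
    exact Multiset.le_add_right _ _
  obtain ⟨f, hf⟩ := List.sublist_iff_exists_fin_orderEmbedding_get_eq.mp hsub
  set g : ℕ → ℕ := fun j => if h : j < m then ((f ⟨j, h⟩ : Fin m') : ℕ) else 0 with hg
  have hgmono : ∀ a b, a < b → b < m → g a < g b := by
    intro a b hab hb
    simp only [hg, dif_pos (lt_trans hab hb), dif_pos hb]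
    exact f.strictMono (by exact hab)
  have hglt : ∀ j (h : j < m), g j < m' := by
    intro j h
    simp only [hg, dif_pos h]
    exact (f ⟨j, h⟩).isLt
  have hlow : i ≤ g i := by
    have := gap_lemma m g hgmono 0 i (Nat.zero_le _) hi
    omega
  have hhigh : g i + m ≤ i + m' := by
    have h1 := gap_lemma m g hgmono i (m - 1) (by omega) (by omega)
    have h2 := hglt (m - 1) (by omega)
    omega
  have hgi : l[i]'hi = l1[g i]'(hglt i hi) := by
    have := hf ⟨i, hi⟩
    simp only [List.get_eq_getElem] at this
    rw [this]
    congr 1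
    simp [hg, dif_pos hi]
  have hmm' : m' = m + Multiset.card A := by omega
  have hsorted : l1.Pairwise (· ≤ ·) := Multiset.pairwise_sort _ _
  have him' : i < m' := by omega
  have hixm' : i + Multiset.card A < m' := by omega
  constructor
  · rw [List.getD_eq_getElem l1 0 him', List.getD_eq_getElem l 0 hi, hgi]
    exact hsorted.rel_get_of_le (a := ⟨i, him'⟩) (b := ⟨g i, hglt i hi⟩) (by simpa using hlow)
  · rw [List.getD_eq_getElem l1 0 hixm', List.getD_eq_getElem l 0 hi, hgi]
    exact hsorted.rel_get_of_le (a := ⟨g i, hglt i hi⟩) (b := ⟨i + Multiset.card A, hixm'⟩)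
      (by simp; omega)

lemma slice_sum (l : List ℝ) (a b : ℕ) (h : a + b ≤ l.length) :
    ((l.drop a).take b).sum = ∑ i ∈ Finset.range b, l.getD (a + i) 0 := by
  have heq : (l.drop a).take b = List.ofFn (fun i : Fin b => l.getD (a + (i : ℕ)) 0) := by
    apply List.ext_getElem
    · simp only [List.length_take, List.length_drop, List.length_ofFn]
      omega
    · intro i h1 h2
      have hidx : a + i < l.length := by
        simp only [List.length_take, List.length_drop] at h1
        omega
      simp only [List.getElem_take, List.getElem_drop, List.getElem_ofFn]
      rw [List.getD_eq_getElem l 0 hidx]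
  rw [heq, List.sum_ofFn]
  exact (Finset.sum_range fun i => l.getD (a + i) 0).symm

lemma trimmed_sum_le (n t x : ℕ) (hx : x ≤ t) (ht : 3 * t < n) (L H : ℝ)
    (M A₁ A₂ : Multiset ℝ) (hM : Multiset.card M = n - x)
    (hA₁ : Multiset.card A₁ = x) (hA₂ : Multiset.card A₂ = x)
    (hB₂ : ∀ y ∈ M + A₂, y ∈ Set.Icc L H) :
    (trimmed t (M + A₁)).sum ≤ (trimmed t (M + A₂)).sum + (H - L) * x := by
  have hxn : x < n := by omega
  have hcard1 : Multiset.card (M + A₁) = n := by rw [Multiset.card_add, hM, hA₁]; omega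
  have hcard2 : Multiset.card (M + A₂) = n := by rw [Multiset.card_add, hM, hA₂]; omega
  set l1 : List ℝ := (M + A₁).sort (· ≤ ·) with hl1
  set l2 : List ℝ := (M + A₂).sort (· ≤ ·) with hl2
  have hlen1 : l1.length = n := by rw [hl1, Multiset.length_sort, hcard1]
  have hlen2 : l2.length = n := by rw [hl2, Multiset.length_sort, hcard2]
  have hlenM : (M.sort (· ≤ ·)).length = n - x := by rw [Multiset.length_sort, hM]
  set N := n - 2 * t with hN
  have hs1 : (trimmed t (M + A₁)).sum = ∑ i ∈ Finset.range N, l1.getD (t + i) 0 := by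
    unfold trimmed
    rw [hcard1]
    exact slice_sum l1 t N (by omega)
  have hs2 : (trimmed t (M + A₂)).sum = ∑ i ∈ Finset.range N, l2.getD (t + i) 0 := by
    unfold trimmed
    rw [hcard2]
    exact slice_sum l2 t N (by omega)
  have hmem2 : ∀ i, i < n → L ≤ l2.getD i 0 ∧ l2.getD i 0 ≤ H := by
    intro i hi
    rw [List.getD_eq_getElem l2 0 (by omega : i < l2.length)]
    have hmem : l2[i] ∈ M + A₂ := by
      rw [← Multiset.mem_sort (· ≤ ·)]
      exact List.getElem_mem _
    exact ⟨(hB₂ _ hmem).1, (hB₂ _ hmem).2⟩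
  have hcmp : ∀ i ∈ Finset.range N, l1.getD (t + i) 0 ≤ l2.getD (t + (x + i)) 0 := by
    intro i hi
    rw [Finset.mem_range] at hi
    have hj : t + i < (M.sort (· ≤ ·)).length := by omega
    have h1 := (order_stat_bounds M A₁ (t + i) hj).1
    have h2 := (order_stat_bounds M A₂ (t + i) hj).2
    rw [hA₂] at h2
    have : t + i + x = t + (x + i) := by omega
    rw [this] at h2
    linarith
  have key2 : ∑ i ∈ Finset.range N, l2.getD (t + (x + i)) 0
      = (∑ i ∈ Finset.range N, l2.getD (t + i) 0)
        + (∑ i ∈ Finset.range x, l2.getD (t + (N + i)) 0)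
        - ∑ i ∈ Finset.range x, l2.getD (t + i) 0 := by
    have e1 := Finset.sum_range_add (fun i => l2.getD (t + i) 0) x N
    have e2 := Finset.sum_range_add (fun i => l2.getD (t + i) 0) N x
    have e3 : x + N = N + x := by omega
    rw [e3] at e1
    linarith
  have htop : ∑ i ∈ Finset.range x, l2.getD (t + (N + i)) 0 ≤ x * H := by
    have := Finset.sum_le_sum (fun i (hi : i ∈ Finset.range x) =>
      (hmem2 (t + (N + i)) (by rw [Finset.mem_range] at hi; omega)).2)
    simpa using this
  have hbot : (x : ℝ) * L ≤ ∑ i ∈ Finset.range x, l2.getD (t + i) 0 := by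
    have := Finset.sum_le_sum (fun i (hi : i ∈ Finset.range x) =>
      (hmem2 (t + i) (by rw [Finset.mem_range] at hi; omega)).1)
    simpa using this
  have hsum := Finset.sum_le_sum hcmp
  rw [hs1, hs2]
  have hHL : (H - L) * x = x * H - x * L := by ring
  linarith

theorem stmt_2 (n t x : ℕ) (hx : x ≤ t) (ht : 3 * t < n) (L H : ℝ) (hLH : L ≤ H)
    (M A₁ A₂ : Multiset ℝ)
    (hM : Multiset.card M = n - x) (hA₁ : Multiset.card A₁ = x) (hA₂ : Multiset.card A₂ = x)
    (hB₁ : ∀ y ∈ M + A₁, y ∈ Set.Icc L H) (hB₂ : ∀ y ∈ M + A₂, y ∈ Set.Icc L H) :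
    |tAVG t (M + A₁) - tAVG t (M + A₂)| ≤ (H - L) * x / ((n : ℝ) - 2 * t) := by
  have hcard1 : Multiset.card (M + A₁) = n := by rw [Multiset.card_add, hM, hA₁]; omega
  have hcard2 : Multiset.card (M + A₂) = n := by rw [Multiset.card_add, hM, hA₂]; omega
  have hD : (0 : ℝ) < (n : ℝ) - 2 * t := by
    have h : ((2 * t : ℕ) : ℝ) < (n : ℕ) := by exact_mod_cast (by omega : 2 * t < n)
    push_cast at h
    linarith
  have h1 := trimmed_sum_le n t x hx ht L H M A₁ A₂ hM hA₁ hA₂ hB₂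
  have h2 := trimmed_sum_le n t x hx ht L H M A₂ A₁ hM hA₂ hA₁ hB₁
  unfold tAVG
  rw [hcard1, hcard2, div_sub_div_same, abs_div, abs_of_pos hD]
  rw [div_le_div_iff_of_pos_right hD, abs_sub_le_iff]
  constructor <;> [skip; skip] <;> push_cast <;> linarith
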